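/- For every integer k ≥ 3, the graph obtained from a cycle of length k by adding two vertices adjacent to each other and to every vertex on the cycle is a minor of B_{2k}, the graph obtained from the alternating double wheel A_{2k} by adding an edge joining its two hubs. -/
import Mathlib


/-- `G` is a minor of `H`: `G` can be obtained from a subgraph of `H` by contracting
edges. Equivalently (for finite graphs, as formalized here), there is a family of
pairwise disjoint nonempty connected "branch sets" in `H`, one for each vertex of `G`,
such that adjacent vertices of `G` have branch sets joined by an edge of `H`. -/
def IsMinor {α β : Type*} (G : SimpleGraph α) (H : SimpleGraph β) : Prop :=
  ∃ φ : α → Set β,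
    (∀ a, (φ a).Nonempty) ∧
    (∀ a, (H.induce (φ a)).Connected) ∧
    (Pairwise (Function.onFun Disjoint φ)) ∧
    (∀ a b, G.Adj a b → ∃ x ∈ φ a, ∃ y ∈ φ b, H.Adj x y)

/-- `B_m`: the `2m`-spoke alternating double wheel `A_m` together with an edge joining
its two hubs. Rim vertices `Sum.inl i` (`i : Fin (2m)`, representing `v_{i+1}`) form a
cycle; hub `Sum.inr 0` (= `v_0`) is joined to the rim vertices with odd subscript, hub
`Sum.inr 1` (= `v_0'`) to those with even subscript, and the two hubs are adjacent. -/
def doubleWheelPlus (m : ℕ) : SimpleGraph (Fin (2 * m) ⊕ Fin 2) :=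
  SimpleGraph.fromRel (fun a b =>
    match a, b with
    | Sum.inl i, Sum.inl j => (j : ℕ) = ((i : ℕ) + 1) % (2 * m)
    | Sum.inl i, Sum.inr h => (h = 0 ∧ (i : ℕ) % 2 = 0) ∨ (h = 1 ∧ (i : ℕ) % 2 = 1)
    | Sum.inr h, Sum.inr h' => h ≠ h'
    | _, _ => False)

/-- The graph obtained from a cycle of length `k` by adding two vertices adjacent to
each other and to every vertex of the cycle. -/
def cyclePlusTwo (k : ℕ) : SimpleGraph (Fin k ⊕ Fin 2) :=
  SimpleGraph.fromRel (fun a b =>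
    match a, b with
    | Sum.inl i, Sum.inl j => (j : ℕ) = ((i : ℕ) + 1) % k
    | Sum.inl _, Sum.inr _ => True
    | Sum.inr h, Sum.inr h' => h ≠ h'
    | _, _ => False)

/-- rim vertex `4i + r` of the branch set of cycle vertex `i`. -/
def bv (k : ℕ) (i : Fin k) (r : Fin 4) : Fin (2 * (2 * k)) :=
  ⟨4 * i + r, by have h1 := i.isLt; have h2 := r.isLt; omega⟩

/-- the branch set of cycle vertex `i`. -/
def bset (k : ℕ) (i : Fin k) : Set (Fin (2 * (2 * k)) ⊕ Fin 2) :=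
  {x | ∃ r : Fin 4, x = Sum.inl (bv k i r)}

lemma dw_adj_inl {k : ℕ} {x y : Fin (2 * (2 * k))}
    (h : (y : ℕ) = ((x : ℕ) + 1) % (2 * (2 * k))) (hne : x ≠ y) :
    (doubleWheelPlus (2 * k)).Adj (Sum.inl x) (Sum.inl y) := by
  rw [doubleWheelPlus, SimpleGraph.fromRel_adj]
  exact ⟨by simpa using hne, Or.inl h⟩

lemma bv_adj {k : ℕ} (i : Fin k) (r r' : Fin 4) (h : (r' : ℕ) = (r : ℕ) + 1) :
    (doubleWheelPlus (2 * k)).Adj (Sum.inl (bv k i r)) (Sum.inl (bv k i r')) := by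
  apply dw_adj_inl
  · show (4 * (i : ℕ) + r') = (4 * (i : ℕ) + r + 1) % (2 * (2 * k))
    have h1 := i.isLt; have h2 := r'.isLt
    rw [Nat.mod_eq_of_lt (by omega)]; omega
  · apply Fin.ne_of_val_ne
    show 4 * (i : ℕ) + r ≠ 4 * (i : ℕ) + r'
    omega

lemma bset_connected {k : ℕ} (i : Fin k) :
    ((doubleWheelPlus (2 * k)).induce (bset k i)).Connected := by
  rw [SimpleGraph.connected_iff]
  refine ⟨?_, ⟨⟨Sum.inl (bv k i 0), ⟨0, rfl⟩⟩⟩⟩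
  have key : ∀ z : bset k i,
      ((doubleWheelPlus (2 * k)).induce (bset k i)).Reachable z
        ⟨Sum.inl (bv k i 0), ⟨0, rfl⟩⟩ := by
    rintro ⟨z, r, rfl⟩
    have e01 : ((doubleWheelPlus (2 * k)).induce (bset k i)).Adj
        ⟨Sum.inl (bv k i 0), ⟨0, rfl⟩⟩ ⟨Sum.inl (bv k i 1), ⟨1, rfl⟩⟩ :=
      bv_adj i 0 1 rfl
    have e12 : ((doubleWheelPlus (2 * k)).induce (bset k i)).Adj
        ⟨Sum.inl (bv k i 1), ⟨1, rfl⟩⟩ ⟨Sum.inl (bv k i 2), ⟨2, rfl⟩⟩ :=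
      bv_adj i 1 2 rfl
    have e23 : ((doubleWheelPlus (2 * k)).induce (bset k i)).Adj
        ⟨Sum.inl (bv k i 2), ⟨2, rfl⟩⟩ ⟨Sum.inl (bv k i 3), ⟨3, rfl⟩⟩ :=
      bv_adj i 2 3 rfl
    fin_cases r
    · exact SimpleGraph.Reachable.refl _
    · exact e01.reachable.symm
    · exact (e12.reachable.symm).trans e01.reachable.symm
    · exact ((e23.reachable.symm).trans e12.reachable.symm).trans e01.reachable.symm
  exact fun x y => (key x).trans (key y).symm

/-- for every `k ≥ 3`, the graph obtained from a cycle of length `k` by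
adding two mutually adjacent vertices joined to all cycle vertices is a minor of
`B_{2k}`. -/
theorem stmt_9 (k : ℕ) (hk : 3 ≤ k) :
    IsMinor (cyclePlusTwo k) (doubleWheelPlus (2 * k)) := by
  classical
  refine ⟨fun a => match a with
    | Sum.inl i => bset k i
    | Sum.inr h => {Sum.inr h}, ?_, ?_, ?_, ?_⟩
  · rintro (i | h)
    · exact ⟨Sum.inl (bv k i 0), ⟨0, rfl⟩⟩
    · exact ⟨Sum.inr h, rfl⟩
  · rintro (i | h)
    · exact bset_connected i
    · rw [SimpleGraph.connected_iff]
      refine ⟨fun x y => ?_, ⟨⟨Sum.inr h, rfl⟩⟩⟩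
      have : x = y := Subtype.ext (by
        have hx := x.2; have hy := y.2
        simp only [Set.mem_singleton_iff] at hx hy
        rw [hx, hy])
      rw [this]
  · rintro (i | h) (j | h') hne
    · -- two blocks
      rw [Function.onFun, Set.disjoint_left]
      rintro x ⟨r, rfl⟩ ⟨r', he⟩
      have hij : i ≠ j := fun h => hne (by rw [h])
      have : (bv k i r : ℕ) = (bv k j r' : ℕ) := by
        have := Sum.inl.inj he; rw [this]
      have h1 : 4 * (i:ℕ) + r = 4 * (j:ℕ) + r' := this
      have h2 := r.isLt; have h3 := r'.isLt
      have : (i:ℕ) = (j:ℕ) := by omega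
      exact hij (Fin.ext this)
    · rw [Function.onFun, Set.disjoint_left]
      rintro x ⟨r, rfl⟩ he
      simp at he
    · rw [Function.onFun, Set.disjoint_left]
      rintro x he ⟨r, hr⟩
      simp only [Set.mem_singleton_iff] at he
      rw [he] at hr; exact absurd hr (by simp)
    · rw [Function.onFun, Set.disjoint_left]
      rintro x he he'
      simp only [Set.mem_singleton_iff] at he he'
      rw [he] at he'
      exact hne (congrArg Sum.inr (Sum.inr.inj he'))
  · rintro (i | h) (j | h') hadj
    · -- cycle adjacency
      rw [cyclePlusTwo, SimpleGraph.fromRel_adj] at hadj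
      obtain ⟨hne, hrel | hrel⟩ := hadj
      · refine ⟨Sum.inl (bv k i 3), ⟨3, rfl⟩, Sum.inl (bv k j 0), ⟨0, rfl⟩, ?_⟩
        apply dw_adj_inl
        · show 4 * (j:ℕ) + 0 = (4 * (i:ℕ) + 3 + 1) % (2 * (2 * k))
          have : (4 * (i:ℕ) + 4) % (2 * (2 * k)) = 4 * (((i:ℕ) + 1) % k) := by
            have : 2 * (2 * k) = 4 * k := by ring
            rw [this]
            have : 4 * (i:ℕ) + 4 = 4 * ((i:ℕ) + 1) := by ring
            rw [this, Nat.mul_mod_mul_left]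
          rw [show 4 * (i:ℕ) + 3 + 1 = 4 * (i:ℕ) + 4 by ring, this, hrel]
          omega
        · apply Fin.ne_of_val_ne
          show 4 * (i:ℕ) + 3 ≠ 4 * (j:ℕ) + 0
          omega
      · refine ⟨Sum.inl (bv k i 0), ⟨0, rfl⟩, Sum.inl (bv k j 3), ⟨3, rfl⟩, ?_⟩
        apply SimpleGraph.Adj.symm
        apply dw_adj_inl
        · show 4 * (i:ℕ) + 0 = (4 * (j:ℕ) + 3 + 1) % (2 * (2 * k))
          have h4 : (4 * (j:ℕ) + 4) % (2 * (2 * k)) = 4 * (((j:ℕ) + 1) % k) := by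
            have h5 : 2 * (2 * k) = 4 * k := by ring
            rw [h5, show 4 * (j:ℕ) + 4 = 4 * ((j:ℕ) + 1) by ring, Nat.mul_mod_mul_left]
          rw [show 4 * (j:ℕ) + 3 + 1 = 4 * (j:ℕ) + 4 by ring, h4, hrel]
          omega
        · apply Fin.ne_of_val_ne
          show 4 * (j:ℕ) + 3 ≠ 4 * (i:ℕ) + 0
          omega
    · -- cycle vertex to hub
      fin_cases h'
      · refine ⟨Sum.inl (bv k i 0), ⟨0, rfl⟩, Sum.inr 0, rfl, ?_⟩
        rw [doubleWheelPlus, SimpleGraph.fromRel_adj]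
        refine ⟨by simp, Or.inl (Or.inl ⟨rfl, ?_⟩)⟩
        show (4 * (i:ℕ) + 0) % 2 = 0
        omega
      · refine ⟨Sum.inl (bv k i 1), ⟨1, rfl⟩, Sum.inr 1, rfl, ?_⟩
        rw [doubleWheelPlus, SimpleGraph.fromRel_adj]
        refine ⟨by simp, Or.inl (Or.inr ⟨rfl, ?_⟩)⟩
        show (4 * (i:ℕ) + 1) % 2 = 1
        omega
    · -- hub to cycle vertex
      fin_cases h
      · refine ⟨Sum.inr 0, rfl, Sum.inl (bv k j 0), ⟨0, rfl⟩, ?_⟩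
        rw [doubleWheelPlus, SimpleGraph.fromRel_adj]
        refine ⟨by simp, Or.inr (Or.inl ⟨rfl, ?_⟩)⟩
        show (4 * (j:ℕ) + 0) % 2 = 0
        omega
      · refine ⟨Sum.inr 1, rfl, Sum.inl (bv k j 1), ⟨1, rfl⟩, ?_⟩
        rw [doubleWheelPlus, SimpleGraph.fromRel_adj]
        refine ⟨by simp, Or.inr (Or.inr ⟨rfl, ?_⟩)⟩
        show (4 * (j:ℕ) + 1) % 2 = 1
        omega
    · -- hub to hub
      rw [cyclePlusTwo, SimpleGraph.fromRel_adj] at hadj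
      obtain ⟨hne, _⟩ := hadj
      have hh : h ≠ h' := fun e => hne (by rw [e])
      refine ⟨Sum.inr h, rfl, Sum.inr h', rfl, ?_⟩
      rw [doubleWheelPlus, SimpleGraph.fromRel_adj]
      exact ⟨fun e => hh (Sum.inr.inj e), Or.inl hh⟩
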